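/- Define the unital completely positive map Ψ on M_N(ℂ) by Ψ(A) = ∫₀^∞ (σ^{1/2}(t+σ)^{−1}) A (σ^{1/2}(t+σ)^{−1}) dt. Then the map Φ ↦ Ψ∘Φ is an injective map from the set of completely positive maps that are self-adjoint with respect to the KMS inner product into the set of completely positive maps that are self-adjoint with respect to the BKM inner product, and it takes unital maps to unital maps. -/

import Mathlib

open MeasureTheory Matrix
open scoped ComplexOrder

noncomputable section

/-- The algebra of `N × N` complex matrices. -/
abbrev Mat (N : ℕ) := Matrix (Fin N) (Fin N) ℂ

variable {N : ℕ}

/-- Real power `σ^s` of a positive definite matrix, defined via the spectral decomposition. -/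
noncomputable def mpow (σ : Mat N) (hσ : σ.PosDef) (s : ℝ) : Mat N :=
  (hσ.1.eigenvectorUnitary : Mat N) *
    Matrix.diagonal (fun i => ((hσ.1.eigenvalues i ^ s : ℝ) : ℂ)) *
    star (hσ.1.eigenvectorUnitary : Mat N)

/-- Complete positivity of a map on `M_N(ℂ)`: existence of a Kraus representation. -/
def IsCPFun (Φ : Mat N → Mat N) : Prop :=
  ∃ (M : ℕ) (V : Fin M → Mat N), ∀ A, Φ A = ∑ j, (V j)ᴴ * A * V j

/-- The KMS inner product `⟨B,A⟩_KMS = Tr[Bᴴ σ^{1/2} A σ^{1/2}]`. -/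
def kmsInner (σ : Mat N) (hσ : σ.PosDef) (B A : Mat N) : ℂ :=
  (Bᴴ * mpow σ hσ (1/2) * A * mpow σ hσ (1/2)).trace

/-- Self-adjointness with respect to the KMS inner product. -/
def IsKMSSelfAdjointFun (σ : Mat N) (hσ : σ.PosDef) (Φ : Mat N → Mat N) : Prop :=
  ∀ A B, kmsInner σ hσ B (Φ A) = kmsInner σ hσ (Φ B) A

/-- The BKM inner product `⟨B,A⟩_BKM = ∫₀¹ Tr[Bᴴ σ^s A σ^{1-s}] ds`. -/
def bkmInner (σ : Mat N) (hσ : σ.PosDef) (B A : Mat N) : ℂ :=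
  ∫ s in (0:ℝ)..1, (Bᴴ * mpow σ hσ s * A * mpow σ hσ (1 - s)).trace

/-- Self-adjointness with respect to the BKM inner product. -/
def IsBKMSelfAdjointFun (σ : Mat N) (hσ : σ.PosDef) (Φ : Mat N → Mat N) : Prop :=
  ∀ A B, bkmInner σ hσ B (Φ A) = bkmInner σ hσ (Φ B) A

/-- The map `Ψ(A) = ∫₀^∞ (σ^{1/2}(t+σ)⁻¹) A (σ^{1/2}(t+σ)⁻¹) dt` (entrywise integral). -/
def PsiBKM (σ : Mat N) (hσ : σ.PosDef) (A : Mat N) : Mat N :=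
  Matrix.of fun i j =>
    ∫ t in Set.Ioi (0:ℝ),
      ((mpow σ hσ (1/2) * ((t : ℂ) • (1 : Mat N) + σ)⁻¹) * A *
        (mpow σ hσ (1/2) * ((t : ℂ) • (1 : Mat N) + σ)⁻¹)) i j

open Real Set Filter Topology

namespace KmsBkmAux

/-- `∫₀^∞ dt/((t+a)(t+b))`. -/
def kerI (a b : ℝ) : ℝ := ∫ t in Set.Ioi (0:ℝ), ((t+a)*(t+b))⁻¹

/-- `∫₀¹ a^s b^(1-s) ds`. -/
def kerW (a b : ℝ) : ℝ := ∫ s in (0:ℝ)..1, a^s * b^(1-s)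

variable {a b : ℝ}

lemma hasDerivAt_F (hab : a ≠ b) (ha : 0 < a) (hb : 0 < b) {t : ℝ} (ht : 0 ≤ t) :
    HasDerivAt (fun t => (Real.log (t+a) - Real.log (t+b))/(b-a)) (((t+a)*(t+b))⁻¹) t := by
  have h1 : (0:ℝ) < t + a := by linarith
  have h2 : (0:ℝ) < t + b := by linarith
  have hba : b - a ≠ 0 := sub_ne_zero.mpr (Ne.symm hab)
  have d1 : HasDerivAt (fun t : ℝ => Real.log (t+a)) (t+a)⁻¹ t := by
    simpa using ((hasDerivAt_id t).add_const a).log h1.ne'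
  have d2 : HasDerivAt (fun t : ℝ => Real.log (t+b)) (t+b)⁻¹ t := by
    simpa using ((hasDerivAt_id t).add_const b).log h2.ne'
  have key := (d1.sub d2).div_const (b - a)
  refine key.congr_deriv ?_
  rw [inv_sub_inv h1.ne' h2.ne', show t+b-(t+a) = b-a by ring, div_div,
    mul_comm ((t+a)*(t+b)), ← div_div, div_self hba, one_div]

lemma tendsto_F (ha : 0 < a) (hb : 0 < b) :
    Tendsto (fun t => (Real.log (t+a) - Real.log (t+b))/(b-a)) atTop (𝓝 0) := by
  have key : Tendsto (fun t => Real.log (t+a) - Real.log (t+b)) atTop (𝓝 0) := by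
    have h1 : Tendsto (fun t : ℝ => 1 + (a-b)/(t+b)) atTop (𝓝 1) := by
      have : Tendsto (fun t : ℝ => (a-b)/(t+b)) atTop (𝓝 0) :=
        Tendsto.div_atTop tendsto_const_nhds (tendsto_atTop_add_const_right _ b tendsto_id)
      simpa using tendsto_const_nhds.add this
    have h2 : Tendsto (fun t : ℝ => Real.log (1 + (a-b)/(t+b))) atTop (𝓝 0) := by
      have := (Real.continuousAt_log one_ne_zero).tendsto.comp h1
      simpa [Function.comp_def] using this
    refine h2.congr' ?_
    filter_upwards [eventually_gt_atTop (0:ℝ)] with t ht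
    have h1' : (0:ℝ) < t + a := by linarith
    have h2' : (0:ℝ) < t + b := by linarith
    rw [← Real.log_div h1'.ne' h2'.ne']
    congr 1
    field_simp
    ring
  simpa using key.div_const (b - a)

lemma hasDerivAt_G (ha : 0 < a) {x : ℝ} (hx : 0 ≤ x) :
    HasDerivAt (fun t : ℝ => -(t+a)⁻¹) (((x+a)*(x+a))⁻¹) x := by
  have h1 : (0:ℝ) < x + a := by linarith
  have d : HasDerivAt (fun t : ℝ => (t+a)⁻¹) (-1/(x+a)^2) x := by
    simpa [Pi.inv_def] using ((hasDerivAt_id x).add_const a).inv h1.ne'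
  have := d.neg
  refine this.congr_deriv ?_
  rw [← pow_two]
  field_simp

lemma kerI_integrableOn (ha : 0 < a) (hb : 0 < b) :
    IntegrableOn (fun t : ℝ => ((t+a)*(t+b))⁻¹) (Set.Ioi 0) := by
  rcases eq_or_ne a b with rfl | hab
  · have htend : Tendsto (fun t : ℝ => -(t+a)⁻¹) atTop (𝓝 0) := by
      have : Tendsto (fun t : ℝ => (t+a)⁻¹) atTop (𝓝 0) :=
        (tendsto_atTop_add_const_right _ a tendsto_id).inv_tendsto_atTop
      simpa using this.neg
    refine integrableOn_Ioi_deriv_of_nonneg' (fun x hx => hasDerivAt_G ha hx.out)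
      (fun x hx => ?_) htend
    have h1 : (0:ℝ) < x + a := by have := hx.out; linarith
    positivity
  · refine integrableOn_Ioi_deriv_of_nonneg' (fun x hx => hasDerivAt_F hab ha hb hx.out)
      (fun x hx => ?_) (tendsto_F ha hb)
    have h1 : (0:ℝ) < x + a := by have := hx.out; linarith
    have h2 : (0:ℝ) < x + b := by have := hx.out; linarith
    positivity

lemma kerI_eq (hab : a ≠ b) (ha : 0 < a) (hb : 0 < b) :
    kerI a b = (Real.log a - Real.log b)/(a-b) := by
  have := integral_Ioi_of_hasDerivAt_of_tendsto'
    (f := fun t => (Real.log (t+a) - Real.log (t+b))/(b-a))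
    (fun x hx => hasDerivAt_F hab ha hb hx.out) (kerI_integrableOn ha hb) (tendsto_F ha hb)
  rw [kerI, this]
  have hba : b - a ≠ 0 := sub_ne_zero.mpr (Ne.symm hab)
  have hab' : a - b ≠ 0 := sub_ne_zero.mpr hab
  field_simp
  ring

lemma kerI_self (ha : 0 < a) : kerI a a = a⁻¹ := by
  have htend : Tendsto (fun t : ℝ => -(t+a)⁻¹) atTop (𝓝 0) := by
    have : Tendsto (fun t : ℝ => (t+a)⁻¹) atTop (𝓝 0) :=
      (tendsto_atTop_add_const_right _ a tendsto_id).inv_tendsto_atTop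
    simpa using this.neg
  have := integral_Ioi_of_hasDerivAt_of_tendsto'
    (f := fun t : ℝ => -(t+a)⁻¹) (m := 0)
    (fun x hx => hasDerivAt_G ha hx.out) (kerI_integrableOn ha ha) htend
  rw [kerI, this]
  simp

lemma kerW_eq (hab : a ≠ b) (ha : 0 < a) (hb : 0 < b) :
    kerW a b = (a - b)/(Real.log a - Real.log b) := by
  have hlog : Real.log a ≠ Real.log b := by
    intro h
    exact hab (by rw [← Real.exp_log ha, ← Real.exp_log hb, h])
  have hsub : Real.log a - Real.log b ≠ 0 := sub_ne_zero.mpr hlog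
  have e1 : ∀ s : ℝ, a ^ s = Real.exp (Real.log a * s) := fun s => Real.rpow_def_of_pos ha s
  have e2 : ∀ s : ℝ, b ^ (1-s) = Real.exp (Real.log b * (1-s)) := fun s =>
    Real.rpow_def_of_pos hb (1-s)
  have hG : ∀ s : ℝ, HasDerivAt (fun s => (a^s * b^(1-s))/(Real.log a - Real.log b))
      (a^s * b^(1-s)) s := by
    intro s
    have d1 : HasDerivAt (fun s : ℝ => Real.exp (Real.log a * s))
        (Real.log a * Real.exp (Real.log a * s)) s := by
      have := ((hasDerivAt_id s).const_mul (Real.log a)).exp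
      simpa [mul_comm] using this
    have hs : HasDerivAt (fun s : ℝ => Real.log b * (1-s)) (-Real.log b) s := by
      have h0 : HasDerivAt (fun s : ℝ => (1:ℝ)-s) (-1) s := by
        simpa using (hasDerivAt_id s).const_sub 1
      have := h0.const_mul (Real.log b)
      refine this.congr_deriv ?_
      ring
    have d2 : HasDerivAt (fun s : ℝ => Real.exp (Real.log b * (1-s)))
        (-Real.log b * Real.exp (Real.log b * (1-s))) s := by
      have := hs.exp
      convert this using 1
      ring
    have key := ((d1.mul d2).div_const (Real.log a - Real.log b))
    simp only [← e1, ← e2] at key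
    refine key.congr_deriv ?_
    field_simp
    ring
  have hcont : Continuous fun s : ℝ => a^s * b^(1-s) := by
    have : (fun s : ℝ => a^s * b^(1-s)) =
        fun s => Real.exp (Real.log a * s) * Real.exp (Real.log b * (1-s)) := by
      funext s
      rw [e1, e2]
    rw [this]
    continuity
  have := intervalIntegral.integral_eq_sub_of_hasDerivAt (fun s _ => hG s)
    (hcont.intervalIntegrable 0 1)
  rw [kerW, this]
  norm_num
  rw [div_sub_div_same]

lemma kerW_self (ha : 0 < a) : kerW a a = a := by
  have : ∀ s : ℝ, a^s * a^(1-s) = a := by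
    intro s
    rw [← Real.rpow_add ha]
    norm_num
  rw [kerW]
  simp only [this]
  simp

lemma kerI_mul_kerW (ha : 0 < a) (hb : 0 < b) : kerI a b * kerW a b = 1 := by
  rcases eq_or_ne a b with rfl | hab
  · rw [kerI_self ha, kerW_self ha]
    exact inv_mul_cancel₀ ha.ne'
  · have hlog : Real.log a ≠ Real.log b := by
      intro h
      exact hab (by rw [← Real.exp_log ha, ← Real.exp_log hb, h])
    rw [kerI_eq hab ha hb, kerW_eq hab ha hb]
    have h1 : a - b ≠ 0 := sub_ne_zero.mpr hab
    have h2 : Real.log a - Real.log b ≠ 0 := sub_ne_zero.mpr hlog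
    field_simp

lemma cont_rpow_base {a : ℝ} (ha : 0 < a) : Continuous fun s : ℝ => a ^ s := by
  have : (fun s : ℝ => a ^ s) = fun s => Real.exp (Real.log a * s) :=
    funext fun s => Real.rpow_def_of_pos ha s
  rw [this]
  continuity

lemma kerI_symm (a b : ℝ) : kerI a b = kerI b a := by
  unfold kerI
  congr 1
  funext t
  rw [mul_comm]


section Spectral

variable (σ : Mat N) (hσ : σ.PosDef)

def Umat : Mat N := (hσ.1.eigenvectorUnitary : Mat N)

def lam (i : Fin N) : ℝ := hσ.1.eigenvalues i

def gfun (i : Fin N) (t : ℝ) : ℝ := Real.sqrt (lam σ hσ i) * (t + lam σ hσ i)⁻¹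

def cMat : Mat N := Matrix.of fun i j =>
  ((Real.sqrt (lam σ hσ i) * Real.sqrt (lam σ hσ j) * kerI (lam σ hσ i) (lam σ hσ j) : ℝ) : ℂ)

def conjU (A : Mat N) : Mat N := star (Umat σ hσ) * A * (Umat σ hσ)

lemma lam_pos (i : Fin N) : 0 < lam σ hσ i := hσ.eigenvalues_pos i

lemma hU1 : star (Umat σ hσ) * Umat σ hσ = 1 := (hσ.1.eigenvectorUnitary).2.1

lemma hU2 : Umat σ hσ * star (Umat σ hσ) = 1 := (hσ.1.eigenvectorUnitary).2.2

lemma hUleft (X : Mat N) : star (Umat σ hσ) * (Umat σ hσ * X) = X := by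
  rw [← Matrix.mul_assoc, hU1, Matrix.one_mul]

lemma hUright (X : Mat N) : Umat σ hσ * (star (Umat σ hσ) * X) = X := by
  rw [← Matrix.mul_assoc, hU2, Matrix.one_mul]

lemma mpow_eq (s : ℝ) : mpow σ hσ s =
    Umat σ hσ * Matrix.diagonal (fun i => ((lam σ hσ i ^ s : ℝ) : ℂ)) * star (Umat σ hσ) := rfl

lemma hspec : σ = Umat σ hσ * Matrix.diagonal (fun i => ((lam σ hσ i : ℝ) : ℂ)) *
    star (Umat σ hσ) := hσ.1.spectral_theorem

lemma conj_mul_conj (d e : Fin N → ℂ) :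
    (Umat σ hσ * Matrix.diagonal d * star (Umat σ hσ)) *
      (Umat σ hσ * Matrix.diagonal e * star (Umat σ hσ))
    = Umat σ hσ * Matrix.diagonal (fun i => d i * e i) * star (Umat σ hσ) := by
  rw [Matrix.mul_assoc (Umat σ hσ * Matrix.diagonal d) (star (Umat σ hσ)) _,
    ← Matrix.mul_assoc (star (Umat σ hσ)) _ _, ← Matrix.mul_assoc (star (Umat σ hσ)) _ _,
    hU1, Matrix.one_mul, ← Matrix.mul_assoc, Matrix.mul_assoc (Umat σ hσ),
    Matrix.diagonal_mul_diagonal]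

lemma sandwich (d e : Fin N → ℂ) (A : Mat N) :
    (Umat σ hσ * Matrix.diagonal d * star (Umat σ hσ)) * A *
      (Umat σ hσ * Matrix.diagonal e * star (Umat σ hσ))
    = Umat σ hσ * (Matrix.diagonal d * conjU σ hσ A * Matrix.diagonal e) * star (Umat σ hσ) := by
  unfold conjU
  simp only [Matrix.mul_assoc]

lemma smul_one_add_eq (t : ℝ) :
    (t : ℂ) • (1 : Mat N) + σ =
      Umat σ hσ * Matrix.diagonal (fun i => ((t + lam σ hσ i : ℝ) : ℂ)) * star (Umat σ hσ) := by
  have hd : Matrix.diagonal (fun _ : Fin N => (t : ℂ)) = (t : ℂ) • (1 : Mat N) := by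
    ext i j
    by_cases h : i = j <;> simp [Matrix.diagonal_apply, Matrix.one_apply, h]
  have h1 : (t : ℂ) • (1 : Mat N) =
      Umat σ hσ * Matrix.diagonal (fun _ => (t : ℂ)) * star (Umat σ hσ) := by
    rw [hd, Matrix.mul_smul, Matrix.mul_one, Matrix.smul_mul, hU2]
  have h2 : Matrix.diagonal (fun i => ((t + lam σ hσ i : ℝ) : ℂ)) =
      Matrix.diagonal (fun _ : Fin N => (t : ℂ)) +
        Matrix.diagonal (fun i => ((lam σ hσ i : ℝ) : ℂ)) := by
    rw [Matrix.diagonal_add]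
    congr 1
    funext i
    push_cast
    rfl
  rw [h2, Matrix.mul_add, Matrix.add_mul, ← hspec σ hσ, ← h1]

lemma inv_eq (t : ℝ) (ht : 0 < t) :
    ((t : ℂ) • (1 : Mat N) + σ)⁻¹ =
      Umat σ hσ * Matrix.diagonal (fun i => ((t + lam σ hσ i : ℝ) : ℂ)⁻¹) * star (Umat σ hσ) := by
  apply Matrix.inv_eq_right_inv
  rw [smul_one_add_eq σ hσ t, conj_mul_conj]
  have hne : ∀ i, ((t + lam σ hσ i : ℝ) : ℂ) ≠ 0 := by
    intro i
    have : (0:ℝ) < t + lam σ hσ i := by have := lam_pos σ hσ i; linarith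
    exact_mod_cast this.ne'
  have : (fun i => ((t + lam σ hσ i : ℝ) : ℂ) * ((t + lam σ hσ i : ℝ) : ℂ)⁻¹) =
      fun _ => (1 : ℂ) := funext fun i => mul_inv_cancel₀ (hne i)
  rw [this, Matrix.diagonal_one, Matrix.mul_one, hU2]

lemma factor_eq (t : ℝ) (ht : 0 < t) :
    mpow σ hσ (1/2) * ((t : ℂ) • (1 : Mat N) + σ)⁻¹ =
      Umat σ hσ * Matrix.diagonal (fun i => ((gfun σ hσ i t : ℝ) : ℂ)) * star (Umat σ hσ) := by
  rw [mpow_eq, inv_eq σ hσ t ht, conj_mul_conj]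
  have h3 : (fun i => ((lam σ hσ i ^ ((1:ℝ)/2) : ℝ) : ℂ) * ((t + lam σ hσ i : ℝ) : ℂ)⁻¹)
      = (fun i => ((gfun σ hσ i t : ℝ) : ℂ)) := by
    funext i
    simp only [gfun]
    rw [Real.sqrt_eq_rpow]
    push_cast
    rfl
  congr 2
  exact congrArg Matrix.diagonal h3

end Spectral


section Psi

variable (σ : Mat N) (hσ : σ.PosDef)

lemma gg_eq (i j : Fin N) : (fun t : ℝ => gfun σ hσ i t * gfun σ hσ j t)
    = fun t => (Real.sqrt (lam σ hσ i) * Real.sqrt (lam σ hσ j)) *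
        ((t + lam σ hσ i) * (t + lam σ hσ j))⁻¹ := by
  funext t
  simp only [gfun, mul_inv]
  ring

lemma integrable_gg (i j : Fin N) :
    IntegrableOn (fun t : ℝ => gfun σ hσ i t * gfun σ hσ j t) (Set.Ioi 0) := by
  rw [gg_eq]
  exact (kerI_integrableOn (lam_pos σ hσ i) (lam_pos σ hσ j)).const_mul _

lemma integral_gg (i j : Fin N) :
    ∫ t in Set.Ioi (0:ℝ), gfun σ hσ i t * gfun σ hσ j t
      = Real.sqrt (lam σ hσ i) * Real.sqrt (lam σ hσ j) * kerI (lam σ hσ i) (lam σ hσ j) := by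
  rw [gg_eq, MeasureTheory.integral_const_mul, kerI]

lemma integrable_term (c : ℂ) (i j : Fin N) :
    Integrable (fun t : ℝ => c * ((gfun σ hσ i t * gfun σ hσ j t : ℝ) : ℂ))
      (MeasureTheory.volume.restrict (Set.Ioi 0)) :=
  ((integrable_gg σ hσ i j).ofReal).const_mul c

lemma mul3_apply (P M Q : Mat N) (i j : Fin N) :
    (P * M * Q) i j = ∑ k, ∑ l, P i k * M k l * Q l j := by
  simp only [Matrix.mul_apply, Finset.sum_mul]
  rw [Finset.sum_comm]

lemma integral_cast (f : ℝ → ℝ) (μ : Measure ℝ) :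
    ∫ x, ((f x : ℝ) : ℂ) ∂μ = ((∫ x, f x ∂μ : ℝ) : ℂ) := integral_ofReal

lemma psi_eq (A : Mat N) :
    PsiBKM σ hσ A = Umat σ hσ *
      (Matrix.of fun i j => cMat σ hσ i j * conjU σ hσ A i j) * star (Umat σ hσ) := by
  ext i j
  simp only [PsiBKM, Matrix.of_apply]
  have hent : ∀ t ∈ Set.Ioi (0:ℝ),
      ((mpow σ hσ (1/2) * ((t : ℂ) • (1 : Mat N) + σ)⁻¹) * A *
        (mpow σ hσ (1/2) * ((t : ℂ) • (1 : Mat N) + σ)⁻¹)) i j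
      = ∑ k, ∑ l, (Umat σ hσ i k * conjU σ hσ A k l * star (Umat σ hσ j l)) *
          ((gfun σ hσ k t * gfun σ hσ l t : ℝ) : ℂ) := by
    intro t ht
    rw [factor_eq σ hσ t ht, sandwich, mul3_apply]
    simp only [Matrix.mul_diagonal, Matrix.diagonal_mul,
      Matrix.star_eq_conjTranspose, Matrix.conjTranspose_apply]
    refine Finset.sum_congr rfl fun k _ => Finset.sum_congr rfl fun l _ => ?_
    push_cast
    ring
  rw [MeasureTheory.setIntegral_congr_fun measurableSet_Ioi hent,
    MeasureTheory.integral_finset_sum _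
      (fun k _ => integrable_finset_sum _ (fun l _ => integrable_term σ hσ _ k l))]
  rw [mul3_apply]
  simp only [Matrix.star_eq_conjTranspose, Matrix.conjTranspose_apply, Matrix.of_apply]
  refine Finset.sum_congr rfl fun k _ => ?_
  rw [MeasureTheory.integral_finset_sum _ (fun l _ => integrable_term σ hσ _ k l)]
  refine Finset.sum_congr rfl fun l _ => ?_
  rw [MeasureTheory.integral_const_mul, integral_cast, integral_gg σ hσ k l]
  simp only [cMat, Matrix.of_apply]
  push_cast
  ring

end Psi


section Inner

variable (σ : Mat N) (hσ : σ.PosDef)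

lemma trace_diag_pair (M1 M2 : Mat N) (d e : Fin N → ℂ) :
    (M1 * Matrix.diagonal d * (M2 * Matrix.diagonal e)).trace
      = ∑ i, ∑ j, M1 i j * d j * M2 j i * e i := by
  simp only [Matrix.trace, Matrix.diag_apply]
  refine Finset.sum_congr rfl fun i _ => ?_
  rw [Matrix.mul_apply]
  refine Finset.sum_congr rfl fun j _ => ?_
  rw [Matrix.mul_diagonal, Matrix.mul_diagonal]
  ring

lemma trace_conj_form (B A : Mat N) (d e : Fin N → ℂ) :
    (Bᴴ * (Umat σ hσ * Matrix.diagonal d * star (Umat σ hσ)) * A *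
      (Umat σ hσ * Matrix.diagonal e * star (Umat σ hσ))).trace
    = ∑ i, ∑ j, star (conjU σ hσ B i j) * conjU σ hσ A i j * (d i * e j) := by
  have e1 : Bᴴ * (Umat σ hσ * Matrix.diagonal d * star (Umat σ hσ)) * A *
      (Umat σ hσ * Matrix.diagonal e * star (Umat σ hσ))
      = (Bᴴ * (Umat σ hσ * Matrix.diagonal d * star (Umat σ hσ)) * A *
          (Umat σ hσ * Matrix.diagonal e)) * star (Umat σ hσ) := by
    simp only [Matrix.mul_assoc]
  rw [e1, Matrix.trace_mul_comm]
  have e2 : star (Umat σ hσ) * (Bᴴ * (Umat σ hσ * Matrix.diagonal d * star (Umat σ hσ)) * A *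
      (Umat σ hσ * Matrix.diagonal e))
      = (star (Umat σ hσ) * Bᴴ * Umat σ hσ) * Matrix.diagonal d *
          ((star (Umat σ hσ) * A * Umat σ hσ) * Matrix.diagonal e) := by
    simp only [Matrix.mul_assoc]
  rw [e2]
  have hH : star (Umat σ hσ) * Bᴴ * Umat σ hσ = (conjU σ hσ B)ᴴ := by
    simp [conjU, Matrix.conjTranspose_mul, Matrix.star_eq_conjTranspose, Matrix.mul_assoc]
  rw [hH]
  have hA' : star (Umat σ hσ) * A * Umat σ hσ = conjU σ hσ A := rfl
  rw [hA', trace_diag_pair, Finset.sum_comm]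
  refine Finset.sum_congr rfl fun i _ => Finset.sum_congr rfl fun j _ => ?_
  rw [Matrix.conjTranspose_apply]
  ring

lemma kms_eq (B A : Mat N) :
    kmsInner σ hσ B A = ∑ i, ∑ j, star (conjU σ hσ B i j) * conjU σ hσ A i j *
      ((Real.sqrt (lam σ hσ i) * Real.sqrt (lam σ hσ j) : ℝ) : ℂ) := by
  rw [kmsInner, mpow_eq, trace_conj_form]
  refine Finset.sum_congr rfl fun i _ => Finset.sum_congr rfl fun j _ => ?_
  rw [Real.sqrt_eq_rpow, Real.sqrt_eq_rpow]
  push_cast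
  ring

lemma intervalIntegral_cast (f : ℝ → ℝ) (a b : ℝ) :
    ∫ x in a..b, ((f x : ℝ) : ℂ) = ((∫ x in a..b, f x : ℝ) : ℂ) :=
  intervalIntegral.integral_ofReal

lemma bkm_eq (B A : Mat N) :
    bkmInner σ hσ B A = ∑ i, ∑ j, star (conjU σ hσ B i j) * conjU σ hσ A i j *
      ((kerW (lam σ hσ i) (lam σ hσ j) : ℝ) : ℂ) := by
  have h1 : ∀ s : ℝ, (Bᴴ * mpow σ hσ s * A * mpow σ hσ (1 - s)).trace
      = ∑ i, ∑ j, star (conjU σ hσ B i j) * conjU σ hσ A i j *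
          (((lam σ hσ i ^ s : ℝ) : ℂ) * ((lam σ hσ j ^ (1-s) : ℝ) : ℂ)) := by
    intro s
    rw [mpow_eq, mpow_eq, trace_conj_form]
  have hcont : ∀ (i j : Fin N), Continuous fun s : ℝ =>
      star (conjU σ hσ B i j) * conjU σ hσ A i j *
        (((lam σ hσ i ^ s : ℝ) : ℂ) * ((lam σ hσ j ^ (1-s) : ℝ) : ℂ)) := by
    intro i j
    refine continuous_const.mul (Continuous.mul ?_ ?_)
    · exact Complex.continuous_ofReal.comp (cont_rpow_base (lam_pos σ hσ i))
    · exact Complex.continuous_ofReal.comp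
        ((cont_rpow_base (lam_pos σ hσ j)).comp (continuous_const.sub continuous_id))
  rw [bkmInner]
  simp only [h1]
  rw [intervalIntegral.integral_finset_sum (fun i _ =>
    (continuous_finset_sum _ (fun j _ => hcont i j)).intervalIntegrable 0 1)]
  refine Finset.sum_congr rfl fun i _ => ?_
  rw [intervalIntegral.integral_finset_sum (fun j _ => (hcont i j).intervalIntegrable 0 1)]
  refine Finset.sum_congr rfl fun j _ => ?_
  have he : (fun s : ℝ => star (conjU σ hσ B i j) * conjU σ hσ A i j *
      (((lam σ hσ i ^ s : ℝ) : ℂ) * ((lam σ hσ j ^ (1-s) : ℝ) : ℂ)))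
      = fun s : ℝ => (star (conjU σ hσ B i j) * conjU σ hσ A i j) *
          (((lam σ hσ i ^ s * lam σ hσ j ^ (1-s) : ℝ)) : ℂ) := by
    funext s
    push_cast
    ring
  rw [he, intervalIntegral.integral_const_mul, intervalIntegral_cast, kerW]

lemma conjU_psi (A : Mat N) : conjU σ hσ (PsiBKM σ hσ A)
    = Matrix.of fun i j => cMat σ hσ i j * conjU σ hσ A i j := by
  rw [psi_eq]
  show star (Umat σ hσ) * (Umat σ hσ * _ * star (Umat σ hσ)) * Umat σ hσ = _
  simp only [Matrix.mul_assoc, hUleft]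
  rw [hU1, Matrix.mul_one]

lemma cMat_mul_kerW (i j : Fin N) :
    cMat σ hσ i j * ((kerW (lam σ hσ i) (lam σ hσ j) : ℝ) : ℂ)
      = ((Real.sqrt (lam σ hσ i) * Real.sqrt (lam σ hσ j) : ℝ) : ℂ) := by
  simp only [cMat, Matrix.of_apply]
  rw [← Complex.ofReal_mul, mul_assoc,
    kerI_mul_kerW (lam_pos σ hσ i) (lam_pos σ hσ j), mul_one]

lemma star_cMat (i j : Fin N) : star (cMat σ hσ i j) = cMat σ hσ i j := by
  simp [cMat, Matrix.of_apply, Complex.star_def, Complex.conj_ofReal]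

lemma bkm_psi_left (B A : Mat N) :
    bkmInner σ hσ B (PsiBKM σ hσ A) = kmsInner σ hσ B A := by
  rw [bkm_eq, kms_eq]
  refine Finset.sum_congr rfl fun i _ => Finset.sum_congr rfl fun j _ => ?_
  rw [conjU_psi, Matrix.of_apply]
  linear_combination (star (conjU σ hσ B i j) * conjU σ hσ A i j) * cMat_mul_kerW σ hσ i j

lemma bkm_psi_right (B A : Mat N) :
    bkmInner σ hσ (PsiBKM σ hσ B) A = kmsInner σ hσ B A := by
  rw [bkm_eq, kms_eq]
  refine Finset.sum_congr rfl fun i _ => Finset.sum_congr rfl fun j _ => ?_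
  rw [conjU_psi, Matrix.of_apply, star_mul', star_cMat]
  linear_combination (star (conjU σ hσ B i j) * conjU σ hσ A i j) * cMat_mul_kerW σ hσ i j

end Inner


section CP

variable (σ : Mat N) (hσ : σ.PosDef)

lemma cMat_symm (i j : Fin N) : cMat σ hσ j i = cMat σ hσ i j := by
  simp only [cMat, Matrix.of_apply]
  rw [kerI_symm]
  push_cast
  ring

lemma cMat_isHermitian : (cMat σ hσ).IsHermitian := by
  ext i j
  rw [Matrix.conjTranspose_apply]
  rw [← cMat_symm σ hσ j i]
  simp only [cMat, Matrix.of_apply, Complex.star_def, Complex.conj_ofReal]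

lemma cMat_quad (x : Fin N → ℂ) :
    dotProduct (star x) (cMat σ hσ *ᵥ x) =
      ((∫ t in Set.Ioi (0:ℝ),
        Complex.normSq (∑ k, x k * ((gfun σ hσ k t : ℝ) : ℂ)) : ℝ) : ℂ) := by
  have step1 : dotProduct (star x) (cMat σ hσ *ᵥ x)
      = ∑ i, ∑ j, ∫ t in Set.Ioi (0:ℝ),
          (star (x i) * x j) * ((gfun σ hσ i t * gfun σ hσ j t : ℝ) : ℂ) := by
    simp only [dotProduct, Matrix.mulVec, cMat, Matrix.of_apply, Pi.star_apply,
      Finset.mul_sum]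
    refine Finset.sum_congr rfl fun i _ => Finset.sum_congr rfl fun j _ => ?_
    rw [MeasureTheory.integral_const_mul, integral_cast, integral_gg σ hσ i j]
    ring
  rw [step1]
  have step2 : ∀ i : Fin N, (∑ j, ∫ t in Set.Ioi (0:ℝ),
      (star (x i) * x j) * ((gfun σ hσ i t * gfun σ hσ j t : ℝ) : ℂ))
      = ∫ t in Set.Ioi (0:ℝ), ∑ j,
          (star (x i) * x j) * ((gfun σ hσ i t * gfun σ hσ j t : ℝ) : ℂ) := fun i =>
    (MeasureTheory.integral_finset_sum _ (fun j _ => integrable_term σ hσ _ i j)).symm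
  simp only [step2]
  rw [← MeasureTheory.integral_finset_sum _ (fun i _ =>
    integrable_finset_sum _ (fun j _ => integrable_term σ hσ _ i j))]
  rw [← integral_cast]
  congr 1
  funext t
  rw [← Complex.mul_conj, map_sum, Finset.sum_mul_sum]
  rw [Finset.sum_comm]
  refine Finset.sum_congr rfl fun i _ => Finset.sum_congr rfl fun j _ => ?_
  simp only [_root_.map_mul, Complex.conj_ofReal, Complex.star_def]
  push_cast
  ring

lemma cMat_posSemidef : (cMat σ hσ).PosSemidef := by
  refine .of_dotProduct_mulVec_nonneg (cMat_isHermitian σ hσ) fun x => ?_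
  rw [cMat_quad]
  exact Complex.zero_le_real.mpr
    (MeasureTheory.integral_nonneg fun t => Complex.normSq_nonneg _)

open scoped MatrixOrder in
lemma psi_cp : IsCPFun (PsiBKM σ hσ) := by
  have hC := cMat_posSemidef σ hσ
  set S := CFC.sqrt (cMat σ hσ) with hSdef
  have hSherm : S.IsHermitian := (CFC.sqrt_nonneg (cMat σ hσ)).posSemidef.1
  have hSS : S * S = cMat σ hσ := CFC.sqrt_mul_sqrt_self _ hC.nonneg
  refine ⟨N, fun k => Umat σ hσ * Matrix.diagonal (fun i => S i k) * star (Umat σ hσ),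
    fun A => ?_⟩
  rw [psi_eq]
  have hVH : ∀ k : Fin N,
      (Umat σ hσ * Matrix.diagonal (fun i => S i k) * star (Umat σ hσ))ᴴ
      = Umat σ hσ * Matrix.diagonal (fun i => star (S i k)) * star (Umat σ hσ) := by
    intro k
    simp only [Matrix.conjTranspose_mul, Matrix.diagonal_conjTranspose,
      Matrix.star_eq_conjTranspose, Matrix.conjTranspose_conjTranspose, Matrix.mul_assoc]
    rfl
  have hterm : ∀ k : Fin N,
      (Umat σ hσ * Matrix.diagonal (fun i => S i k) * star (Umat σ hσ))ᴴ * A *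
        (Umat σ hσ * Matrix.diagonal (fun i => S i k) * star (Umat σ hσ))
      = Umat σ hσ * (Matrix.diagonal (fun i => star (S i k)) * conjU σ hσ A *
          Matrix.diagonal (fun i => S i k)) * star (Umat σ hσ) := by
    intro k
    rw [hVH, sandwich]
  simp only [hterm]
  rw [← Finset.sum_mul, ← Finset.mul_sum]
  congr 1
  congr 1
  ext i j
  rw [Matrix.sum_apply]
  simp only [Matrix.of_apply]
  have hentry : ∀ k : Fin N,
      (Matrix.diagonal (fun i => star (S i k)) * conjU σ hσ A *
        Matrix.diagonal (fun i => S i k)) i j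
      = star (S i k) * conjU σ hσ A i j * S j k := by
    intro k
    rw [Matrix.mul_diagonal, Matrix.diagonal_mul]
  simp only [hentry]
  have hstar : ∀ k : Fin N, star (S i k) = S k i := by
    intro k
    conv_rhs => rw [← hSherm]
    rw [Matrix.conjTranspose_apply]
  calc cMat σ hσ i j * conjU σ hσ A i j
      = (S * S) j i * conjU σ hσ A i j := by rw [hSS, cMat_symm]
    _ = (∑ k, S j k * S k i) * conjU σ hσ A i j := by rw [Matrix.mul_apply]
    _ = ∑ k, star (S i k) * conjU σ hσ A i j * S j k := by
        rw [Finset.sum_mul]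
        refine Finset.sum_congr rfl fun k _ => ?_
        rw [hstar]
        ring

lemma psi_one : PsiBKM σ hσ 1 = 1 := by
  rw [psi_eq]
  have h1 : conjU σ hσ (1 : Mat N) = 1 := by
    unfold conjU
    rw [Matrix.mul_one, hU1]
  rw [h1]
  have h2 : (Matrix.of fun i j => cMat σ hσ i j * (1 : Mat N) i j) = (1 : Mat N) := by
    ext i j
    by_cases h : i = j
    · subst h
      simp only [Matrix.of_apply, Matrix.one_apply_eq, mul_one, cMat]
      rw [Real.mul_self_sqrt (lam_pos σ hσ i).le, kerI_self (lam_pos σ hσ i),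
        mul_inv_cancel₀ (lam_pos σ hσ i).ne']
      norm_num
    · simp [Matrix.one_apply, h]
  rw [h2, Matrix.mul_one, hU2]

lemma cMat_ne_zero (i j : Fin N) : cMat σ hσ i j ≠ 0 := by
  simp only [cMat, Matrix.of_apply, ne_eq, Complex.ofReal_eq_zero]
  intro h
  have hw := kerI_mul_kerW (lam_pos σ hσ i) (lam_pos σ hσ j)
  have h1 : Real.sqrt (lam σ hσ i) ≠ 0 := (Real.sqrt_pos.mpr (lam_pos σ hσ i)).ne'
  have h2 : Real.sqrt (lam σ hσ j) ≠ 0 := (Real.sqrt_pos.mpr (lam_pos σ hσ j)).ne'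
  have hk : kerI (lam σ hσ i) (lam σ hσ j) = 0 := by
    rcases mul_eq_zero.mp h with h' | h'
    · exact absurd h' (mul_ne_zero h1 h2)
    · exact h'
  rw [hk, zero_mul] at hw
  exact zero_ne_one hw

lemma conj_cancel (M : Mat N) :
    star (Umat σ hσ) * (Umat σ hσ * M * star (Umat σ hσ)) * Umat σ hσ = M := by
  simp only [Matrix.mul_assoc, hUleft]
  rw [hU1, Matrix.mul_one]

lemma unconj (Z : Mat N) : Umat σ hσ * conjU σ hσ Z * star (Umat σ hσ) = Z := by
  unfold conjU
  simp only [Matrix.mul_assoc, hUright]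
  rw [hU2, Matrix.mul_one]

lemma psi_injective {X Y : Mat N} (h : PsiBKM σ hσ X = PsiBKM σ hσ Y) : X = Y := by
  rw [psi_eq, psi_eq] at h
  have h2 : (Matrix.of fun i j => cMat σ hσ i j * conjU σ hσ X i j)
      = Matrix.of fun i j => cMat σ hσ i j * conjU σ hσ Y i j := by
    have := congrArg (fun M => star (Umat σ hσ) * M * Umat σ hσ) h
    simpa only [conj_cancel σ hσ] using this
  have h3 : conjU σ hσ X = conjU σ hσ Y := by
    ext i j
    have h4 := congrFun (congrFun h2 i) j
    simp only [Matrix.of_apply] at h4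
    exact mul_left_cancel₀ (cMat_ne_zero σ hσ i j) h4
  rw [← unconj σ hσ X, ← unconj σ hσ Y, h3]

lemma isCPFun_comp {Φ Ψf : Mat N → Mat N} (hΦ : IsCPFun Φ) (hΨ : IsCPFun Ψf) :
    IsCPFun (Ψf ∘ Φ) := by
  obtain ⟨M1, W, hW⟩ := hΦ
  obtain ⟨M2, V, hV⟩ := hΨ
  refine ⟨M1 * M2, fun m => W (finProdFinEquiv.symm m).1 * V (finProdFinEquiv.symm m).2,
    fun A => ?_⟩
  rw [Function.comp_apply, hW, hV]
  have key : ∑ k, (V k)ᴴ * (∑ j, (W j)ᴴ * A * W j) * V k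
      = ∑ p : Fin M1 × Fin M2, (W p.1 * V p.2)ᴴ * A * (W p.1 * V p.2) := by
    rw [Fintype.sum_prod_type]
    simp only [Finset.mul_sum, Finset.sum_mul]
    rw [Finset.sum_comm]
    refine Finset.sum_congr rfl fun j _ => Finset.sum_congr rfl fun k _ => ?_
    simp only [Matrix.conjTranspose_mul, Matrix.mul_assoc]
  rw [key]
  exact (Equiv.sum_comp finProdFinEquiv.symm
    (fun p => (W p.1 * V p.2)ᴴ * A * (W p.1 * V p.2))).symm

end CP

end KmsBkmAux

open KmsBkmAux in
/-- `Ψ` is a unital CP map, and `Φ ↦ Ψ ∘ Φ` maps the set of KMS self-adjoint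
CP maps injectively into the set of BKM self-adjoint CP maps, taking unital maps to unital
maps. -/
theorem kms_to_bkm (N : ℕ) (hN : 2 ≤ N) (σ : Mat N) (hσ : σ.PosDef)
    (htr : σ.trace = 1) :
    (IsCPFun (PsiBKM σ hσ) ∧ PsiBKM σ hσ 1 = 1) ∧
    (∀ Φ : Mat N → Mat N, IsCPFun Φ → IsKMSSelfAdjointFun σ hσ Φ →
        IsCPFun (PsiBKM σ hσ ∘ Φ) ∧ IsBKMSelfAdjointFun σ hσ (PsiBKM σ hσ ∘ Φ)) ∧
    (∀ Φ₁ Φ₂ : Mat N → Mat N,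
        IsCPFun Φ₁ → IsKMSSelfAdjointFun σ hσ Φ₁ →
        IsCPFun Φ₂ → IsKMSSelfAdjointFun σ hσ Φ₂ →
        PsiBKM σ hσ ∘ Φ₁ = PsiBKM σ hσ ∘ Φ₂ → Φ₁ = Φ₂) ∧
    (∀ Φ : Mat N → Mat N, IsCPFun Φ → IsKMSSelfAdjointFun σ hσ Φ → Φ 1 = 1 →
        (PsiBKM σ hσ ∘ Φ) 1 = 1) := by
  refine ⟨⟨psi_cp σ hσ, psi_one σ hσ⟩, ?_, ?_, ?_⟩
  · intro Φ hCP hKMS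
    refine ⟨isCPFun_comp hCP (psi_cp σ hσ), ?_⟩
    intro A B
    simp only [Function.comp_apply]
    rw [bkm_psi_left σ hσ, bkm_psi_right σ hσ, hKMS]
  · intro Φ₁ Φ₂ _ _ _ _ h
    funext A
    exact psi_injective σ hσ (congrFun h A)
  · intro Φ _ _ hΦ1
    simp only [Function.comp_apply, hΦ1, psi_one σ hσ]
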